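/- arXiv:math-ph/0508028 — 3 statements merged into one kernel-verified Lean document; each statement's English description precedes it below -/
import Mathlib

section
/- For any p ∈ 𝕋³ and any z ∈ ℂ \ [m(p), M(p)], the number z is an eigenvalue of the generalized Friedrichs model h(p) if and only if Δ(p,z) = 0. -/
noncomputable section

open MeasureTheory Real Set Filter Topology NNReal ENNReal

/-- We model the 3-torus `𝕋³ = (ℝ/2πℤ)³` by `ℝ³` together with periodicity
hypotheses; the fundamental domain is the cube `(-π, π]³`. -/
abbrev T3 : Type := EuclideanSpace ℝ (Fin 3)

/-- The fundamental domain `(-π,π]³` of the torus. -/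
def cube : Set T3 := {p | ∀ i, p i ∈ Set.Ioc (-Real.pi) Real.pi}

/-- Lebesgue measure on the fundamental domain (= Haar measure of the torus). -/
def μc : Measure T3 := volume.restrict cube

def cube2 : Set (T3 × T3) := cube ×ˢ cube

def μc2 : Measure (T3 × T3) := volume.restrict cube2

/-- A point of the lattice `(2πℤ)³`. -/
def latticeShift (s : Fin 3 → ℤ) : T3 := WithLp.toLp 2 (fun i => 2 * Real.pi * (s i))

/-- A function on `ℝ³` which is `(2πℤ)³`-periodic, i.e. a function on the torus. -/
def Periodic3 (f : T3 → ℝ) : Prop := ∀ (p : T3) (s : Fin 3 → ℤ), f (p + latticeShift s) = f p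

/-- Hölder continuity with exponent `θ` (the class `ℬ(θ)` of the paper). -/
def HolderB {X Y : Type*} [PseudoEMetricSpace X] [PseudoEMetricSpace Y] (θ : ℝ≥0) (f : X → Y) :
    Prop := ∃ C : ℝ≥0, HolderWith C θ f

/-- `i`-th standard basis vector. -/
def eb (i : Fin 3) : T3 := EuclideanSpace.single i 1

/-- Basic standing hypotheses on the data `u, v, w` of the model operator. -/
structure BasicSetup (u v : T3 → ℝ) (w : T3 → T3 → ℝ) : Prop where
  u_meas : Measurable u
  u_bdd : ∃ C : ℝ, ∀ p, |u p| ≤ C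
  u_per : Periodic3 u
  v_mem : MemLp v 2 μc
  v_per : Periodic3 v
  w_cont : Continuous (Function.uncurry w)
  w_bdd : ∃ C : ℝ, ∀ p q, |w p q| ≤ C
  w_symm : ∀ p q, w p q = w q p
  w_per : ∀ (s t : Fin 3 → ℤ) (p q : T3), w (p + latticeShift s) (q + latticeShift t) = w p q

/-- Part (i) of Assumption 1: `w` is symmetric, even, has a unique non-degenerate
minimum at `(0,0)` and all its third order partial derivatives are Hölder continuous
with exponent `θ ∈ (1/2,1)`. -/
structure Assumption1i (w : T3 → T3 → ℝ) (θ : ℝ≥0) : Prop where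
  theta_lb : (1:ℝ)/2 < (θ : ℝ)
  theta_ub : (θ : ℝ) < 1
  w_even : ∀ p q, w (-p) (-q) = w p q
  contDiff : ContDiff ℝ 3 (Function.uncurry w)
  min_le : ∀ p q, w 0 0 ≤ w p q
  uniqueMin : ∀ p ∈ cube, ∀ q ∈ cube, w p q = w 0 0 → p = 0 ∧ q = 0
  nondeg : ∀ x : T3 × T3, x ≠ 0 →
    0 < iteratedFDeriv ℝ 2 (Function.uncurry w) ((0 : T3), (0 : T3)) (fun _ => x)
  holder3 : HolderB θ (iteratedFDeriv ℝ 3 (Function.uncurry w))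

/-- Part (ii) of Assumption 1: the Hessian blocks of `w` at `(0,0)` are `l₁ W` and
`l₂ W` with `W` positive definite, `l₁ > 0`, `l₂ ≠ 0`. -/
structure Assumption1ii (w : T3 → T3 → ℝ) (W : Matrix (Fin 3) (Fin 3) ℝ) (l1 l2 : ℝ) : Prop where
  posdef : W.PosDef
  l1_pos : 0 < l1
  l2_ne : l2 ≠ 0
  hess_pp : ∀ i j, iteratedFDeriv ℝ 2 (Function.uncurry w) ((0 : T3), (0 : T3))
    ![(eb i, (0 : T3)), (eb j, (0 : T3))] = l1 * W i j
  hess_pq : ∀ i j, iteratedFDeriv ℝ 2 (Function.uncurry w) ((0 : T3), (0 : T3))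
    ![(eb i, (0 : T3)), ((0 : T3), eb j)] = l2 * W i j

/-- Assumption 2: `u ∈ C²` is even with a unique non-degenerate minimum at `0`;
`v` is even and Hölder continuous with exponent `θ ∈ (1/2,1)`. -/
structure Assumption2 (u v : T3 → ℝ) (θ : ℝ≥0) : Prop where
  theta_lb : (1:ℝ)/2 < (θ : ℝ)
  theta_ub : (θ : ℝ) < 1
  u_contDiff : ContDiff ℝ 2 u
  u_even : ∀ p, u (-p) = u p
  u_min : ∀ p, u 0 ≤ u p
  u_uniqueMin : ∀ p ∈ cube, u p = u 0 → p = 0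
  u_nondeg : ∀ x : T3, x ≠ 0 → 0 < iteratedFDeriv ℝ 2 u 0 (fun _ => x)
  v_even : ∀ p, v (-p) = v p
  v_holder : HolderB θ v

/-- `m = min w` (under Assumption 1 the minimum value is `w(0,0)`). -/
def mMin (w : T3 → T3 → ℝ) : ℝ := w 0 0

/-- `M = max w`. -/
def MMax (w : T3 → T3 → ℝ) : ℝ := sSup (Set.range (Function.uncurry w))

/-- `m(p) = min_q w(p,q)`. -/
def mLow (w : T3 → T3 → ℝ) (p : T3) : ℝ := sInf (Set.range (w p))

/-- `M(p) = max_q w(p,q)`. -/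
def MUp (w : T3 → T3 → ℝ) (p : T3) : ℝ := sSup (Set.range (w p))

/-- `Λ(p,z) = ∫_{𝕋³} v(t)²/(w(p,t)−z) dt`. -/
def Lam (v : T3 → ℝ) (w : T3 → T3 → ℝ) (p : T3) (z : ℝ) : ℝ :=
  ∫ t in cube, (v t) ^ 2 / (w p t - z)

/-- The Fredholm determinant `Δ(p,z) = u(p) − z − (1/2)∫ v(q)²/(w(p,q)−z) dq`. -/
def Del (u v : T3 → ℝ) (w : T3 → T3 → ℝ) (p : T3) (z : ℝ) : ℝ :=
  u p - z - (1/2) * Lam v w p z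

/-- Part (i) of Assumption 3: `Λ(·,m)` has a unique maximum at `p = 0`. -/
def Assumption3i (v : T3 → ℝ) (w : T3 → T3 → ℝ) : Prop :=
  ∀ p ∈ cube, p ≠ 0 → Lam v w p (mMin w) < Lam v w 0 (mMin w)

/-- Assumption 3: `Λ(·,m)` has a unique maximum at `p = 0`, and
`Λ(0,m) − Λ(p,m) > c|p|²` near `0`. -/
structure Assumption3 (v : T3 → ℝ) (w : T3 → T3 → ℝ) : Prop where
  uniqueMax : Assumption3i v w
  quad : ∃ δ > (0:ℝ), ∃ c > (0:ℝ), ∀ p : T3, p ≠ 0 → ‖p‖ < δ →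
    c * ‖p‖ ^ 2 < Lam v w 0 (mMin w) - Lam v w p (mMin w)

/-- `z` is an eigenvalue of the generalized Friedrichs model `h(p)` acting on
`ℂ ⊕ L²(𝕋³)` (real form): there is a nonzero `(f₀, f₁)` with `f₁ ∈ L²` solving the
eigenvalue equations. -/
def IsEigh (u v : T3 → ℝ) (w : T3 → T3 → ℝ) (p : T3) (z : ℝ) : Prop :=
  ∃ (f₀ : ℝ) (f₁ : T3 → ℝ),
    MemLp f₁ 2 μc ∧
    ¬ (f₀ = 0 ∧ f₁ =ᵐ[μc] 0) ∧
    u p * f₀ + (Real.sqrt 2)⁻¹ * (∫ q in cube, v q * f₁ q) = z * f₀ ∧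
    (∀ᵐ q ∂μc, (Real.sqrt 2)⁻¹ * v q * f₀ + w p q * f₁ q = z * f₁ q)

/-- Complex version: `z ∈ ℂ` is an eigenvalue of `h(p)` on `ℂ ⊕ L²(𝕋³; ℂ)`. -/
def IsEighC (u v : T3 → ℝ) (w : T3 → T3 → ℝ) (p : T3) (z : ℂ) : Prop :=
  ∃ (f₀ : ℂ) (f₁ : T3 → ℂ),
    MemLp f₁ 2 μc ∧
    ¬ (f₀ = 0 ∧ f₁ =ᵐ[μc] 0) ∧
    (u p : ℂ) * f₀ + ((Real.sqrt 2 : ℂ))⁻¹ * (∫ q in cube, (v q : ℂ) * f₁ q) = z * f₀ ∧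
    (∀ᵐ q ∂μc, ((Real.sqrt 2 : ℂ))⁻¹ * (v q : ℂ) * f₀ + (w p q : ℂ) * f₁ q = z * f₁ q)

/-- Complex Fredholm determinant of `h(p)`. -/
def DelC (u v : T3 → ℝ) (w : T3 → T3 → ℝ) (p : T3) (z : ℂ) : ℂ :=
  (u p : ℂ) - z - (1/2 : ℂ) * ∫ q in cube, ((v q : ℂ)) ^ 2 / ((w p q : ℂ) - z)

/-- `(f₀, f₁, f₂)` solves the eigenvalue equations `H f = z f` for the model
operator `H` on `ℂ ⊕ L²(𝕋³) ⊕ L²ₛ((𝕋³)²)` (real form, possibly `f = 0`). -/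
structure IsEigSolH (u₀ : ℝ) (u v : T3 → ℝ) (w : T3 → T3 → ℝ) (z : ℝ)
    (f₀ : ℝ) (f₁ : T3 → ℝ) (f₂ : T3 → T3 → ℝ) : Prop where
  mem1 : MemLp f₁ 2 μc
  mem2 : MemLp (Function.uncurry f₂) 2 μc2
  symm2 : ∀ p q, f₂ p q = f₂ q p
  eq0 : u₀ * f₀ + (∫ q in cube, v q * f₁ q) = z * f₀
  eq1 : ∀ᵐ p ∂μc, v p * f₀ + u p * f₁ p + (∫ q in cube, v q * f₂ p q) = z * f₁ p
  eq2 : ∀ᵐ x ∂μc2,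
    (1/2) * (v x.2 * f₁ x.1 + v x.1 * f₁ x.2) + w x.1 x.2 * f₂ x.1 x.2 = z * f₂ x.1 x.2

/-- `z` is an eigenvalue of the model operator `H`. -/
def IsEigH (u₀ : ℝ) (u v : T3 → ℝ) (w : T3 → T3 → ℝ) (z : ℝ) : Prop :=
  ∃ (f₀ : ℝ) (f₁ : T3 → ℝ) (f₂ : T3 → T3 → ℝ),
    IsEigSolH u₀ u v w z f₀ f₁ f₂ ∧
    ¬ (f₀ = 0 ∧ f₁ =ᵐ[μc] 0 ∧ Function.uncurry f₂ =ᵐ[μc2] 0)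

/-- A family of vectors of `ℂ ⊕ L² ⊕ L²ₛ` (in function form) is linearly independent
modulo almost-everywhere equality. -/
def AEIndep {n : ℕ} (F : Fin n → ℝ × (T3 → ℝ) × (T3 → T3 → ℝ)) : Prop :=
  ∀ c : Fin n → ℝ,
    (∑ i, c i * (F i).1 = 0) →
    ((fun q => ∑ i, c i * (F i).2.1 q) =ᵐ[μc] 0) →
    ((fun x : T3 × T3 => ∑ i, c i * (F i).2.2 x.1 x.2) =ᵐ[μc2] 0) →
    c = 0

/-- The multiplicity of `z` as an eigenvalue of `H`: the largest number of linearly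
independent (mod a.e. equality) solutions of `H f = z f`. -/
def multH (u₀ : ℝ) (u v : T3 → ℝ) (w : T3 → T3 → ℝ) (z : ℝ) : ℕ :=
  sSup {n : ℕ | ∃ F : Fin n → ℝ × (T3 → ℝ) × (T3 → T3 → ℝ),
    (∀ i, IsEigSolH u₀ u v w z (F i).1 (F i).2.1 (F i).2.2) ∧ AEIndep F}

/-- `N(z)`: the number of eigenvalues of `H` below `z`, counted with multiplicity. -/
def Ncount (u₀ : ℝ) (u v : T3 → ℝ) (w : T3 → T3 → ℝ) (z : ℝ) : ℝ≥0∞ :=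
  ∑' x : {x : ℝ // x < z ∧ IsEigH u₀ u v w x}, (multH u₀ u v w x : ℝ≥0∞)

/-- The operator `h(0)` has an `m`-energy resonance. -/
def HasResonance (u v : T3 → ℝ) (w : T3 → T3 → ℝ) : Prop :=
  u 0 ≠ mMin w ∧
  ∃ ψ : T3 → ℝ, Continuous ψ ∧ ψ 0 ≠ 0 ∧
    ∀ q, ψ q = v q / (2 * (u 0 - mMin w)) * ∫ t in cube, v t * ψ t / (w 0 t - mMin w)
/-- for `z ∈ ℂ \ [m(p), M(p)]`, `z` is an eigenvalue of the generalized
Friedrichs model `h(p)` iff `Δ(p,z) = 0`. -/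
theorem eigenvalue_iff_fredholm_det_zero
    (u v : T3 → ℝ) (w : T3 → T3 → ℝ)
    (hb : BasicSetup u v w)
    (p : T3) (z : ℂ)
    (hz : ∀ x : ℝ, mLow w p ≤ x → x ≤ MUp w p → (x : ℂ) ≠ z) :
    IsEighC u v w p z ↔ DelC u v w p z = 0 := by
  -- boundedness of `w p ·`
  obtain ⟨Cw, hCw⟩ := hb.w_bdd
  have hbA : BddAbove (Set.range (w p)) := by
    refine ⟨Cw, ?_⟩; rintro x ⟨q, rfl⟩; exact (abs_le.1 (hCw p q)).2
  have hbB : BddBelow (Set.range (w p)) := by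
    refine ⟨-Cw, ?_⟩; rintro x ⟨q, rfl⟩; exact (abs_le.1 (hCw p q)).1
  have hwmem : ∀ q, w p q ∈ Set.Icc (mLow w p) (MUp w p) := fun q =>
    ⟨csInf_le hbB ⟨q, rfl⟩, le_csSup hbA ⟨q, rfl⟩⟩
  have hne : ∀ q, ((w p q : ℂ) - z) ≠ 0 := fun q =>
    sub_ne_zero.mpr (hz _ (hwmem q).1 (hwmem q).2)
  -- uniform lower bound on the denominator
  set K : Set ℂ := (fun x : ℝ => (x : ℂ)) '' Set.Icc (mLow w p) (MUp w p) with hK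
  have hKne : K.Nonempty := ⟨_, _, hwmem 0, rfl⟩
  have hKc : IsCompact K := isCompact_Icc.image Complex.continuous_ofReal
  have hzK : z ∉ K := by rintro ⟨x, hx, rfl⟩; exact hz x hx.1 hx.2 rfl
  set ε : ℝ := Metric.infDist z K with hε
  have hεpos : 0 < ε := (hKc.isClosed.notMem_iff_infDist_pos hKne).1 hzK
  have hlow : ∀ q, ε ≤ ‖(w p q : ℂ) - z‖ := by
    intro q
    have hm : ((w p q : ℝ) : ℂ) ∈ K := ⟨_, hwmem q, rfl⟩
    calc ε ≤ dist z ((w p q : ℝ) : ℂ) := Metric.infDist_le_dist_of_mem hm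
      _ = ‖(w p q : ℂ) - z‖ := by rw [dist_comm, dist_eq_norm]
  -- measurability facts
  have hvm : AEStronglyMeasurable (fun q => (v q : ℂ)) μc :=
    Complex.continuous_ofReal.comp_aestronglyMeasurable hb.v_mem.aestronglyMeasurable
  have hwc : Continuous (fun q => (w p q : ℂ) - z) :=
    (Complex.continuous_ofReal.comp (hb.w_cont.comp (Continuous.prodMk_right p))).sub continuous_const
  have hinvc : Continuous (fun q => ((w p q : ℂ) - z)⁻¹) := hwc.inv₀ hne
  have hv2 : Integrable (fun q => v q ^ 2) μc := hb.v_mem.integrable_sq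
  -- integrability of v²/(w-z)
  have hIint : Integrable (fun q => (v q : ℂ) ^ 2 / ((w p q : ℂ) - z)) μc := by
    refine Integrable.mono' (hv2.const_mul ε⁻¹) ?_ ?_
    · have : AEStronglyMeasurable (fun q => ((v q : ℂ) * (v q : ℂ)) * ((w p q : ℂ) - z)⁻¹) μc :=
        (hvm.mul hvm).mul hinvc.aestronglyMeasurable
      refine this.congr (Filter.Eventually.of_forall fun q => ?_)
      simp [sq, div_eq_mul_inv]
    · refine Filter.Eventually.of_forall fun q => ?_
      rw [norm_div]
      have h1 : ‖(v q : ℂ) ^ 2‖ = v q ^ 2 := by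
        rw [norm_pow, Complex.norm_real, Real.norm_eq_abs, sq_abs]
      rw [h1]
      rw [div_le_iff₀ (lt_of_lt_of_le hεpos (hlow q))]
      calc v q ^ 2 = ε⁻¹ * v q ^ 2 * ε := by field_simp
        _ ≤ ε⁻¹ * v q ^ 2 * ‖(w p q : ℂ) - z‖ := by
            refine mul_le_mul_of_nonneg_left (hlow q) ?_
            positivity
  set s : ℂ := ((Real.sqrt 2 : ℝ) : ℂ) with hs
  have hinv2 : s⁻¹ * s⁻¹ = 1 / 2 := by
    rw [← mul_inv, hs, ← Complex.ofReal_mul, Real.mul_self_sqrt (by norm_num)]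
    norm_num
  set I : ℂ := ∫ q in cube, (v q : ℂ) ^ 2 / ((w p q : ℂ) - z) with hI
  have hμ : μc = volume.restrict cube := rfl
  constructor
  · rintro ⟨f₀, f₁, hmem, hnz, heq0, heq1⟩
    -- solve the second equation for f₁
    have hae : f₁ =ᵐ[μc] fun q => -s⁻¹ * f₀ * (v q : ℂ) / ((w p q : ℂ) - z) := by
      filter_upwards [heq1] with q hq
      rw [eq_div_iff (hne q)]
      linear_combination hq
    have hf₀ : f₀ ≠ 0 := by
      intro h0
      refine hnz ⟨h0, ?_⟩
      filter_upwards [hae] with q hq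
      simp [hq, h0]
    have hint : (∫ q in cube, (v q : ℂ) * f₁ q) = -s⁻¹ * f₀ * I := by
      rw [hI, ← MeasureTheory.integral_const_mul, ← hμ]
      refine integral_congr_ae ?_
      filter_upwards [hae] with q hq
      rw [hq]; ring
    rw [hint] at heq0
    have hD : DelC u v w p z * f₀ = 0 := by
      unfold DelC
      rw [← hI]
      linear_combination heq0 + f₀ * I * hinv2
    rcases mul_eq_zero.1 hD with h | h
    · exact h
    · exact absurd h hf₀
  · intro hDel
    refine ⟨1, fun q => -s⁻¹ * (v q : ℂ) / ((w p q : ℂ) - z), ?_, ?_, ?_, ?_⟩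
    · refine MemLp.of_le_mul (c := ‖s⁻¹‖ * ε⁻¹) hb.v_mem ?_ ?_
      · have hm : AEStronglyMeasurable (fun q => -s⁻¹ * (v q : ℂ) * ((w p q : ℂ) - z)⁻¹) μc :=
          (aestronglyMeasurable_const.mul hvm).mul hinvc.aestronglyMeasurable
        refine hm.congr (Filter.Eventually.of_forall fun q => ?_)
        simp [div_eq_mul_inv]
      · refine Filter.Eventually.of_forall fun q => ?_
        rw [norm_div, norm_mul, norm_neg, Complex.norm_real]
        rw [div_le_iff₀ (lt_of_lt_of_le hεpos (hlow q)), mul_assoc, mul_assoc]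
        refine mul_le_mul_of_nonneg_left ?_ (norm_nonneg _)
        calc ‖v q‖ = ε⁻¹ * ‖v q‖ * ε := by field_simp
          _ ≤ ε⁻¹ * ‖v q‖ * ‖(w p q : ℂ) - z‖ := by
              refine mul_le_mul_of_nonneg_left (hlow q) ?_
              positivity
          _ = ε⁻¹ * (‖v q‖ * ‖(w p q : ℂ) - z‖) := by ring
    · simp
    · have hint : (∫ q in cube, (v q : ℂ) * (-s⁻¹ * (v q : ℂ) / ((w p q : ℂ) - z))) = -s⁻¹ * I := by
        rw [hI, ← MeasureTheory.integral_const_mul]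
        refine integral_congr_ae (Filter.Eventually.of_forall fun q => ?_)
        ring
      rw [hint]
      unfold DelC at hDel
      rw [← hI] at hDel
      linear_combination hDel - I * hinv2
    · refine Filter.Eventually.of_forall fun q => ?_
      have hsne : s ≠ 0 := by
        rw [hs]
        simpa using Real.sqrt_ne_zero'.mpr (by norm_num : (0:ℝ) < 2)
      field_simp [hne q]
      ring
end
end

section
/- Suppose part (i) of Assumption 1 holds, v is Hölder continuous on 𝕋³ with exponent θ ∈ (1/2,1), and max_{p∈𝕋³} Δ(p,m) < 0. Then for every p ∈ 𝕋³ the operator h(p) has exactly one eigenvalue in (−∞, m); equivalently, for every p ∈ 𝕋³ there is a unique z < m with Δ(p,z) = 0. -/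
noncomputable section

open MeasureTheory Real Set Filter Topology NNReal ENNReal

lemma cube_subset_ball : cube ⊆ Metric.closedBall (0:T3) (3*Real.pi) := by
  intro p hp
  have hnn : (0:ℝ) ≤ Real.pi := Real.pi_pos.le
  have h1 : ∀ i, |p i| ≤ Real.pi := by
    intro i
    rcases hp i with ⟨h1, h2⟩
    rw [abs_le]; constructor <;> linarith
  have : ‖p‖ ≤ Real.sqrt (3 * Real.pi ^ 2) := by
    rw [EuclideanSpace.norm_eq]
    apply Real.sqrt_le_sqrt
    have : ∀ i : Fin 3, ‖p i‖^2 ≤ Real.pi^2 := by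
      intro i
      have := h1 i
      rw [Real.norm_eq_abs]
      nlinarith [abs_nonneg (p i)]
    calc ∑ i, ‖p i‖^2 ≤ ∑ _i : Fin 3, Real.pi^2 := Finset.sum_le_sum (fun i _ => this i)
    _ = 3 * Real.pi^2 := by rw [Finset.sum_const, Finset.card_univ, Fintype.card_fin]; ring
  simp only [Metric.mem_closedBall, dist_zero_right]
  refine this.trans ?_
  rw [show (3:ℝ)*Real.pi^2 = (Real.sqrt 3 * Real.pi)^2 by
    rw [mul_pow, Real.sq_sqrt (by norm_num)]]
  rw [Real.sqrt_sq (by positivity)]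
  have : Real.sqrt 3 ≤ 3 := by
    nlinarith [Real.sq_sqrt (show (0:ℝ) ≤ 3 by norm_num), Real.sqrt_nonneg 3]
  nlinarith [Real.sqrt_nonneg 3]

lemma integrableOn_cube {f : T3 → ℝ} (hf : Continuous f) : IntegrableOn f cube := by
  have : IntegrableOn f (Metric.closedBall (0:T3) (3*Real.pi)) :=
    (hf.continuousOn).integrableOn_compact (isCompact_closedBall _ _)
  exact this.mono_set cube_subset_ball

instance : IsFiniteMeasure μc := by
  constructor
  rw [μc, Measure.restrict_apply MeasurableSet.univ, Set.univ_inter]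
  exact lt_of_le_of_lt (measure_mono cube_subset_ball) (measure_closedBall_lt_top)

lemma lattice_reduce (p : T3) : ∃ p₀ ∈ cube, ∃ s : Fin 3 → ℤ, p = p₀ + latticeShift s := by
  set s : Fin 3 → ℤ := fun i => ⌈(p i - Real.pi) / (2 * Real.pi)⌉ with hs
  refine ⟨p - latticeShift s, ?_, s, by abel⟩
  intro i
  have hπ : 0 < 2 * Real.pi := by positivity
  have h1 : (p i - Real.pi) / (2 * Real.pi) ≤ (s i : ℝ) := Int.le_ceil _
  have h2 : ((s i : ℝ)) < (p i - Real.pi) / (2 * Real.pi) + 1 := Int.ceil_lt_add_one _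
  rw [div_le_iff₀ hπ] at h1
  have h2' : (s i : ℝ) * (2 * Real.pi) < (p i - Real.pi) + (2 * Real.pi) := by
    have := (mul_lt_mul_of_pos_right h2 hπ)
    rwa [add_mul, one_mul, div_mul_cancel₀ _ (ne_of_gt hπ)] at this
  have hv : (p - latticeShift s) i = p i - 2 * Real.pi * (s i) := rfl
  rw [hv]
  constructor <;> nlinarith

lemma measurableSet_cube : MeasurableSet cube := by
  have : cube = ⋂ i : Fin 3, (fun p : T3 => p i) ⁻¹' (Set.Ioc (-Real.pi) Real.pi) := by
    ext p; simp [cube, Set.mem_iInter]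
  rw [this]
  exact MeasurableSet.iInter fun i =>
    ((by fun_prop : Continuous (fun p : T3 => p i)).measurable) measurableSet_Ioc

lemma memL2_of_continuous {f : T3 → ℝ} (hf : Continuous f) : MemLp f 2 μc := by
  obtain ⟨C, hC⟩ := (isCompact_closedBall (0:T3) (3*Real.pi)).exists_bound_of_continuousOn
    hf.continuousOn
  refine MemLp.of_bound (hf.aestronglyMeasurable) C ?_
  have hmem : ∀ᵐ x ∂μc, x ∈ cube := ae_restrict_mem measurableSet_cube
  filter_upwards [hmem] with x hx
  exact hC x (cube_subset_ball hx)

section main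
variable {u v : T3 → ℝ} {w : T3 → T3 → ℝ}

lemma wpos (hmin : ∀ p q, w 0 0 ≤ w p q) {z : ℝ} (hz : z < mMin w) (p q : T3) :
    0 < w p q - z := by
  have := hmin p q; simp only [mMin] at hz; linarith

lemma integrand_cont (hv : Continuous v) (hw : Continuous (Function.uncurry w))
    (hmin : ∀ p q, w 0 0 ≤ w p q) {p : T3} {z : ℝ} (hz : z < mMin w) :
    Continuous fun t => v t ^ 2 / (w p t - z) := by
  have hwp : Continuous (w p) := hw.comp (Continuous.prodMk_right p)
  exact (hv.pow 2).div (hwp.sub continuous_const)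
    (fun t => ne_of_gt (wpos hmin hz p t))

lemma lam_integrable (hv : Continuous v) (hw : Continuous (Function.uncurry w))
    (hmin : ∀ p q, w 0 0 ≤ w p q) {p : T3} {z : ℝ} (hz : z < mMin w) :
    IntegrableOn (fun t => v t ^ 2 / (w p t - z)) cube :=
  integrableOn_cube (integrand_cont hv hw hmin hz)

lemma Lam_nonneg (hmin : ∀ p q, w 0 0 ≤ w p q) {p : T3} {z : ℝ} (hz : z < mMin w) :
    0 ≤ Lam v w p z := by
  refine integral_nonneg fun t => ?_
  exact div_nonneg (sq_nonneg _) (wpos hmin hz p t).le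

lemma Lam_mono (hv : Continuous v) (hw : Continuous (Function.uncurry w))
    (hmin : ∀ p q, w 0 0 ≤ w p q) {p : T3} {z₁ z₂ : ℝ} (h12 : z₁ ≤ z₂) (hz : z₂ < mMin w) :
    Lam v w p z₁ ≤ Lam v w p z₂ := by
  have hz1 : z₁ < mMin w := lt_of_le_of_lt h12 hz
  refine integral_mono (lam_integrable hv hw hmin hz1) (lam_integrable hv hw hmin hz) fun t => ?_
  have h1 := wpos hmin hz1 p t
  have h2 := wpos hmin hz p t
  exact div_le_div_of_nonneg_left (sq_nonneg _) h2 (by linarith)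

lemma Del_strictAnti (hv : Continuous v) (hw : Continuous (Function.uncurry w))
    (hmin : ∀ p q, w 0 0 ≤ w p q) {p : T3} {z₁ z₂ : ℝ} (h12 : z₁ < z₂) (hz : z₂ < mMin w) :
    Del u v w p z₂ < Del u v w p z₁ := by
  have := Lam_mono (v := v) (p := p) hv hw hmin h12.le hz
  simp only [Del]; nlinarith

end main

section main2
variable {u v : T3 → ℝ} {w : T3 → T3 → ℝ}

lemma Lam_continuousAt (hv : Continuous v) (hw : Continuous (Function.uncurry w))
    (hmin : ∀ p q, w 0 0 ≤ w p q) {p : T3} {z : ℝ} (hz : z < mMin w) :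
    ContinuousAt (fun z' => Lam v w p z') z := by
  set m := mMin w
  set b := (z + m) / 2 with hb
  have hzb : z < b := by simp only [hb]; linarith
  have hbm : b < m := by simp only [hb]; linarith
  rw [ContinuousAt]
  have key : Tendsto (fun z' => Lam v w p z') (𝓝 z) (𝓝 (Lam v w p z)) := by
    simp only [Lam]
    refine tendsto_integral_filter_of_dominated_convergence
      (fun t => v t ^ 2 / (m - b)) ?_ ?_ ?_ ?_
    · filter_upwards with z'
      exact (((hv.pow 2).measurable).div
        (((hw.comp (Continuous.prodMk_right p)).sub continuous_const).measurable)).aestronglyMeasurable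
    · filter_upwards [eventually_lt_nhds hzb] with z' hz' 
      refine ae_of_all _ fun t => ?_
      have hwt : 0 < w p t - z' := wpos hmin (lt_trans hz' hbm) p t
      rw [Real.norm_eq_abs, abs_of_nonneg (div_nonneg (sq_nonneg _) hwt.le)]
      have h1 : m - b ≤ w p t - z' := by
        have hw0 : m ≤ w p t := hmin p t
        linarith
      exact div_le_div_of_nonneg_left (sq_nonneg _) (by linarith) h1
    · exact integrableOn_cube (Continuous.div_const (hv.pow 2) (m - b))
    · refine ae_of_all _ fun t => ?_
      have hwt : 0 < w p t - z := wpos hmin hz p t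
      exact Tendsto.div tendsto_const_nhds
        (((continuous_const.sub continuous_id).tendsto z)) (ne_of_gt hwt)
  exact key

end main2

section main3
variable {u v : T3 → ℝ} {w : T3 → T3 → ℝ}

lemma ae_gt_min (hmin : ∀ p q, w 0 0 ≤ w p q)
    (hper : ∀ (s t : Fin 3 → ℤ) (p q : T3), w (p + latticeShift s) (q + latticeShift t) = w p q)
    (huniq : ∀ p ∈ cube, ∀ q ∈ cube, w p q = w 0 0 → p = 0 ∧ q = 0) (p : T3) :
    ∀ᵐ t ∂μc, mMin w < w p t := by
  rw [μc, ae_restrict_iff' measurableSet_cube, ae_iff]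
  refine measure_mono_null (fun t ht => ?_) (measure_singleton (0 : T3))
  simp only [Set.mem_setOf_eq, _root_.not_imp, not_lt] at ht
  obtain ⟨htc, hle⟩ := ht
  obtain ⟨p₀, hp₀, s, hps⟩ := lattice_reduce p
  have hshift0 : latticeShift (0 : Fin 3 → ℤ) = (0 : T3) := by
    ext i; simp [latticeShift]
  have heq : w p t = w p₀ t := by
    rw [hps]
    calc w (p₀ + latticeShift s) t = w (p₀ + latticeShift s) (t + latticeShift 0) := by
          rw [hshift0, add_zero]
      _ = w p₀ t := hper s 0 p₀ t
  have hwe : w p₀ t = w 0 0 := le_antisymm (heq ▸ hle) (hmin p₀ t)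
  exact Set.mem_singleton_iff.2 (huniq p₀ hp₀ t htc hwe).2

lemma exists_del_neg (hv : Continuous v) (hw : Continuous (Function.uncurry w))
    (hmin : ∀ p q, w 0 0 ≤ w p q)
    (hper : ∀ (s t : Fin 3 → ℤ) (p q : T3), w (p + latticeShift s) (q + latticeShift t) = w p q)
    (huniq : ∀ p ∈ cube, ∀ q ∈ cube, w p q = w 0 0 → p = 0 ∧ q = 0)
    (p : T3) (hDelm : Del u v w p (mMin w) < 0) :
    ∃ z, z < mMin w ∧ Del u v w p z < 0 := by
  set m := mMin w with hm
  by_cases hi : IntegrableOn (fun t => v t ^ 2 / (w p t - m)) cube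
  · -- dominated convergence along 𝓝[<] m
    have hae := ae_gt_min hmin hper huniq p
    have hLam : Tendsto (fun z' => Lam v w p z') (𝓝[<] m) (𝓝 (Lam v w p m)) := by
      simp only [Lam]
      refine tendsto_integral_filter_of_dominated_convergence
        (fun t => v t ^ 2 / (w p t - m)) ?_ ?_ hi ?_
      · filter_upwards with z'
        exact (((hv.pow 2).measurable).div
          (((hw.comp (Continuous.prodMk_right p)).sub continuous_const).measurable)).aestronglyMeasurable
      · filter_upwards [eventually_mem_nhdsWithin] with z' (hz' : z' ∈ Set.Iio m)
        filter_upwards [hae] with t hwt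
        have h1 : 0 < w p t - m := by linarith [hwt]
        have h2 : 0 < w p t - z' := by simp only [Set.mem_Iio] at hz'; linarith
        rw [Real.norm_eq_abs, abs_of_nonneg (div_nonneg (sq_nonneg _) h2.le)]
        refine div_le_div_of_nonneg_left (sq_nonneg _) h1 ?_
        simp only [Set.mem_Iio] at hz'; linarith
      · filter_upwards [hae] with t hwt
        have h1 : w p t - m ≠ 0 := by linarith [hwt]
        exact (Tendsto.div tendsto_const_nhds
          ((continuous_const.sub continuous_id).tendsto m) h1).mono_left nhdsWithin_le_nhds
    have hDel : Tendsto (fun z' => Del u v w p z') (𝓝[<] m) (𝓝 (Del u v w p m)) := by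
      simp only [Del]
      exact (tendsto_const_nhds.sub (tendsto_id.mono_left nhdsWithin_le_nhds)).sub
        (tendsto_const_nhds.mul hLam)
    have hev : ∀ᶠ z' in 𝓝[<] m, Del u v w p z' < 0 := hDel.eventually_lt_const hDelm
    obtain ⟨z, hz1, hz2⟩ := (eventually_mem_nhdsWithin.and hev).exists
    exact ⟨z, hz1, hz2⟩
  · have hLam0 : Lam v w p m = 0 := integral_undef hi
    have hum : u p < m := by simp only [Del, hLam0] at hDelm; linarith
    refine ⟨(u p + m) / 2, by linarith, ?_⟩
    have hzm : (u p + m) / 2 < m := by linarith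
    have := Lam_nonneg (v := v) (p := p) hmin hzm
    simp only [Del]; linarith

end main3

section main4
variable {u v : T3 → ℝ} {w : T3 → T3 → ℝ}

lemma existsUnique_zero (hv : Continuous v) (hw : Continuous (Function.uncurry w))
    (hmin : ∀ p q, w 0 0 ≤ w p q)
    (hper : ∀ (s t : Fin 3 → ℤ) (p q : T3), w (p + latticeShift s) (q + latticeShift t) = w p q)
    (huniq : ∀ p ∈ cube, ∀ q ∈ cube, w p q = w 0 0 → p = 0 ∧ q = 0)
    (p : T3) (hDelm : Del u v w p (mMin w) < 0) :
    ∃! z : ℝ, z < mMin w ∧ Del u v w p z = 0 := by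
  set m := mMin w with hm
  -- a point where Del is positive
  set a : ℝ := min (m - 1) (u p - (1/2) * Lam v w p (m - 1) - 1) with ha
  have ham : a < m := lt_of_le_of_lt (min_le_left _ _) (by linarith)
  have haM : a ≤ m - 1 := min_le_left _ _
  have hDa : 0 < Del u v w p a := by
    have h1 : Lam v w p a ≤ Lam v w p (m - 1) :=
      Lam_mono hv hw hmin haM (by simp only [hm]; linarith)
    have h2 : a ≤ u p - (1/2) * Lam v w p (m - 1) - 1 := min_le_right _ _
    simp only [Del]; linarith
  obtain ⟨b, hbm, hDb⟩ := exists_del_neg hv hw hmin hper huniq p hDelm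
  have hab : a ≤ b := by
    by_contra hba
    push_neg at hba
    exact absurd (Del_strictAnti hv hw hmin hba ham) (by linarith)
  have hcont : ContinuousOn (fun z => Del u v w p z) (Set.Icc a b) := by
    intro z hz
    have hzm : z < m := lt_of_le_of_lt hz.2 hbm
    have : ContinuousAt (fun z => Del u v w p z) z := by
      simp only [Del]
      exact (continuousAt_const.sub continuousAt_id).sub
        (continuousAt_const.mul (Lam_continuousAt hv hw hmin hzm))
    exact this.continuousWithinAt
  have h0mem : (0:ℝ) ∈ Set.Icc (Del u v w p b) (Del u v w p a) := ⟨hDb.le, hDa.le⟩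
  obtain ⟨z, hzab, hz0⟩ := intermediate_value_Icc' hab hcont h0mem
  have hz0' : Del u v w p z = 0 := hz0
  refine ⟨z, ⟨lt_of_le_of_lt hzab.2 hbm, hz0'⟩, ?_⟩
  rintro y ⟨hym, hy0⟩
  have hzm : z < m := lt_of_le_of_lt hzab.2 hbm
  rcases lt_trichotomy y z with h | h | h
  · exact absurd (Del_strictAnti hv hw hmin h hzm) (by rw [hy0, hz0']; simp)
  · exact h
  · exact absurd (Del_strictAnti hv hw hmin h hym) (by rw [hy0, hz0']; simp)

lemma eig_iff_del (hv : Continuous v) (hw : Continuous (Function.uncurry w))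
    (hmin : ∀ p q, w 0 0 ≤ w p q) (p : T3) {z : ℝ} (hz : z < mMin w) :
    IsEigh u v w p z ↔ Del u v w p z = 0 := by
  have hne : ∀ q, w p q - z ≠ 0 := fun q => ne_of_gt (wpos hmin hz p q)
  have hss : (Real.sqrt 2)⁻¹ * (Real.sqrt 2)⁻¹ = 1/2 := by
    rw [← mul_inv, Real.mul_self_sqrt (by norm_num : (0:ℝ) ≤ 2)]; norm_num
  constructor
  · rintro ⟨f₀, f₁, hmem, hnz, heq0, heq1⟩
    have hf₁ : ∀ᵐ q ∂μc, f₁ q = -((Real.sqrt 2)⁻¹) * v q * f₀ / (w p q - z) := by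
      filter_upwards [heq1] with q hq
      rw [eq_div_iff (hne q)]
      linear_combination hq
    have hf0 : f₀ ≠ 0 := by
      intro h
      refine hnz ⟨h, ?_⟩
      filter_upwards [hf₁] with q hq
      simp [hq, h]
    have hint : ∫ q in cube, v q * f₁ q = -((Real.sqrt 2)⁻¹) * f₀ * Lam v w p z := by
      have h1 : ∫ q in cube, v q * f₁ q
          = ∫ q in cube, (-((Real.sqrt 2)⁻¹) * f₀) * (v q ^ 2 / (w p q - z)) := by
        refine integral_congr_ae ?_
        filter_upwards [hf₁] with q hq
        rw [hq]; ring
      rw [h1, MeasureTheory.integral_const_mul]; rfl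
    rw [hint] at heq0
    have key : f₀ * Del u v w p z = 0 := by
      simp only [Del]
      linear_combination heq0 + (f₀ * Lam v w p z) * hss
    exact (mul_eq_zero.mp key).resolve_left hf0
  · intro hDel
    refine ⟨1, fun q => -((Real.sqrt 2)⁻¹) * (v q / (w p q - z)), ?_, ?_, ?_, ?_⟩
    · refine memL2_of_continuous ?_
      exact continuous_const.mul (hv.div
        ((hw.comp (Continuous.prodMk_right p)).sub continuous_const) hne)
    · simp
    · have hint : ∫ q in cube, v q * (-((Real.sqrt 2)⁻¹) * (v q / (w p q - z)))
          = -((Real.sqrt 2)⁻¹) * Lam v w p z := by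
        have h1 : ∫ q in cube, v q * (-((Real.sqrt 2)⁻¹) * (v q / (w p q - z)))
            = ∫ q in cube, (-((Real.sqrt 2)⁻¹)) * (v q ^ 2 / (w p q - z)) := by
          refine integral_congr_ae (ae_of_all _ fun q => ?_)
          ring
        rw [h1, MeasureTheory.integral_const_mul]; rfl
      rw [hint]
      simp only [Del] at hDel
      linear_combination hDel - (Lam v w p z) * hss
    · refine ae_of_all _ fun q => ?_
      have hs2 : Real.sqrt 2 ≠ 0 := by positivity
      field_simp [hne q, hs2]
      ring
end main4

/-- if `max_p Δ(p,m) < 0`, then every `h(p)` has exactly one eigenvalue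
below `m`; equivalently `Δ(p,·)` has a unique zero below `m`. -/
theorem unique_eigenvalue_below_m_of_max_neg
    (u v : T3 → ℝ) (w : T3 → T3 → ℝ) (θ : ℝ≥0)
    (hb : BasicSetup u v w)
    (h1i : Assumption1i w θ)
    (hv : HolderB θ v)
    (hmax : sSup (Set.range fun p => Del u v w p (mMin w)) < 0) :
    ∀ p : T3,
      (∃! z : ℝ, z < mMin w ∧ IsEigh u v w p z) ∧
      (∃! z : ℝ, z < mMin w ∧ Del u v w p z = 0) := by
  have hθ : (0:ℝ≥0) < θ := by
    have := h1i.theta_lb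
    have h0 : (0:ℝ) < (θ:ℝ) := by linarith
    exact_mod_cast h0
  obtain ⟨C, hC⟩ := hv
  have hvc : Continuous v := hC.continuous hθ
  have hwc : Continuous (Function.uncurry w) := hb.w_cont
  have hmin := h1i.min_le
  have hper := hb.w_per
  have huniq := h1i.uniqueMin
  have hbdd : BddAbove (Set.range fun p => Del u v w p (mMin w)) := by
    by_contra h
    rw [Real.sSup_of_not_bddAbove h] at hmax
    exact lt_irrefl 0 hmax
  intro p
  have hDelm : Del u v w p (mMin w) < 0 :=
    lt_of_le_of_lt (le_csSup hbdd ⟨p, rfl⟩) hmax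
  obtain ⟨z, ⟨hzm, hz0⟩, huz⟩ := existsUnique_zero hvc hwc hmin hper huniq p hDelm
  constructor
  · refine ⟨z, ⟨hzm, (eig_iff_del hvc hwc hmin p hzm).mpr hz0⟩, ?_⟩
    rintro y ⟨hym, hye⟩
    exact huz y ⟨hym, (eig_iff_del hvc hwc hmin p hym).mp hye⟩
  · exact ⟨z, ⟨hzm, hz0⟩, huz⟩
end
end

section
/- Suppose Assumptions 1, 2 and 3 hold, Δ(0,m) = 0 and v(0) = 0 (so that z = m is an eigenvalue of h(0)). Then there exist δ > 0 and c > 0 such that |Δ(p,m)| ≥ c·|p|² for all p with |p| < δ, and |Δ(p,m)| ≥ c for all p ∈ 𝕋³ with |p| ≥ δ. -/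
noncomputable section

open MeasureTheory Real Set Filter Topology NNReal ENNReal

/-- in the threshold-eigenvalue case there are `c, δ > 0` with
`|Δ(p,m)| ≥ c|p|²` for `|p| < δ` and `|Δ(p,m)| ≥ c` for `p ∈ 𝕋³` with `|p| ≥ δ`. -/
theorem Del_bounds_eigenvalue_case
    (u v : T3 → ℝ) (w : T3 → T3 → ℝ) (θ : ℝ≥0)
    (W : Matrix (Fin 3) (Fin 3) ℝ) (l1 l2 : ℝ)
    (hb : BasicSetup u v w)
    (h1i : Assumption1i w θ) (h1ii : Assumption1ii w W l1 l2)
    (h2 : Assumption2 u v θ) (h3 : Assumption3 v w)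
    (hΔ : Del u v w 0 (mMin w) = 0) (hv0 : v 0 = 0) :
    ∃ δ > (0:ℝ), ∃ c > (0:ℝ),
      (∀ p : T3, ‖p‖ < δ → c * ‖p‖ ^ 2 ≤ |Del u v w p (mMin w)|) ∧
      (∀ p ∈ cube, δ ≤ ‖p‖ → c ≤ |Del u v w p (mMin w)|) := by
  obtain ⟨δ₀, hδ₀, c₀, hc₀, hquad⟩ := h3.quad
  have hkey : ∀ p, Del u v w p (mMin w) =
      (u p - u 0) + (1/2) * (Lam v w 0 (mMin w) - Lam v w p (mMin w)) := by
    intro p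
    simp only [Del] at hΔ ⊢
    linarith
  set A : Set T3 := {p | ∀ i, p i ∈ Set.Icc (-Real.pi) Real.pi} with hA
  set K : Set T3 := A ∩ {p | δ₀ ≤ ‖p‖} with hKdef
  have hupos : ∀ p ∈ K, 0 < u p - u 0 := by
    rintro p ⟨hpA, hpn⟩
    have hpne : p ≠ 0 := by
      intro h; rw [h] at hpn; simp only [Set.mem_setOf_eq, norm_zero] at hpn; linarith
    rcases lt_or_eq_of_le (h2.u_min p) with h | h
    · linarith
    · exfalso
      set s : Fin 3 → ℤ := fun i => if p i = -Real.pi then 1 else 0 with hs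
      have hmem : p + latticeShift s ∈ cube := by
        intro i
        have hpi := hpA i
        show p i + latticeShift s i ∈ Set.Ioc (-Real.pi) Real.pi
        by_cases hc : p i = -Real.pi
        · have hsi : s i = 1 := by simp [hs, hc]
          simp only [latticeShift, WithLp.ofLp_toLp, hsi, hc]
          constructor
          · push_cast; nlinarith [Real.pi_pos]
          · push_cast; nlinarith [Real.pi_pos]
        · have hsi : s i = 0 := by simp [hs, hc]
          simp only [latticeShift, WithLp.ofLp_toLp, hsi]
          push_cast
          rw [mul_zero, add_zero]
          exact ⟨lt_of_le_of_ne hpi.1 (Ne.symm hc), hpi.2⟩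
      have hz : p + latticeShift s = 0 :=
        h2.u_uniqueMin _ hmem ((hb.u_per p s).trans h.symm)
      apply hpne
      have hco : ∀ i, p i = 0 := by
        intro i
        have hi : p i + 2 * Real.pi * ((s i : ℤ) : ℝ) = 0 := by
          have := congrArg (fun x : T3 => x i) hz
          simpa [latticeShift] using this
        by_cases hc : p i = -Real.pi
        · have hsi : s i = 1 := by simp [hs, hc]
          rw [hsi, hc] at hi
          push_cast at hi
          nlinarith [Real.pi_pos]
        · have hsi : s i = 0 := by simp [hs, hc]
          rw [hsi] at hi
          push_cast at hi
          linarith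
      ext i
      simpa using hco i
  obtain ⟨ε, hε, hεK⟩ : ∃ ε > (0:ℝ), ∀ p ∈ K, ε ≤ u p - u 0 := by
    by_cases hK : K.Nonempty
    · have hAc : IsClosed A := by
        have hrw : A = ⋂ i, (fun p : T3 => p i) ⁻¹' Set.Icc (-Real.pi) Real.pi := by
          ext p; simp [hA]
        rw [hrw]
        exact isClosed_iInter fun i => IsClosed.preimage ((continuous_apply i).comp (PiLp.continuous_ofLp 2 _)) isClosed_Icc
      have hKcl : IsClosed K := hAc.inter (isClosed_le continuous_const continuous_norm)
      have hKb : K ⊆ Metric.closedBall 0 7 := by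
        rintro p ⟨hpA, -⟩
        rw [Metric.mem_closedBall, dist_zero_right, EuclideanSpace.norm_eq]
        have h16 : ∀ i : Fin 3, ‖p i‖ ^ 2 ≤ 16 := by
          intro i
          have h1 := (hpA i).1
          have h2' := (hpA i).2
          have h4 : |p i| ≤ 4 := by
            rw [abs_le]; constructor <;> nlinarith [Real.pi_le_four]
          calc ‖p i‖ ^ 2 = |p i| ^ 2 := by rw [Real.norm_eq_abs]
            _ ≤ 4 ^ 2 := by nlinarith [abs_nonneg (p i)]
            _ = 16 := by norm_num
        have hsum : ∑ i, ‖p i‖ ^ 2 ≤ 49 := by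
          calc ∑ i, ‖p i‖ ^ 2 ≤ ∑ _i : Fin 3, (16:ℝ) :=
                Finset.sum_le_sum (fun i _ => h16 i)
            _ = 48 := by simp; norm_num
            _ ≤ 49 := by norm_num
        calc Real.sqrt (∑ i, ‖p i‖ ^ 2) ≤ Real.sqrt 49 := Real.sqrt_le_sqrt hsum
          _ = 7 := by
              rw [show (49:ℝ) = 7 ^ 2 by norm_num, Real.sqrt_sq (by norm_num : (0:ℝ) ≤ 7)]
      have hcomp : IsCompact K :=
        (isCompact_closedBall (0:T3) 7).of_isClosed_subset hKcl hKb
      obtain ⟨p₀, hp₀, hmin⟩ := hcomp.exists_isMinOn hK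
        ((h2.u_contDiff.continuous.sub continuous_const).continuousOn)
      exact ⟨u p₀ - u 0, hupos p₀ hp₀, fun p hp => hmin hp⟩
    · exact ⟨1, one_pos, fun p hp => absurd ⟨p, hp⟩ hK⟩
  refine ⟨δ₀, hδ₀, min (c₀/2) ε, lt_min (by linarith) hε, ?_, ?_⟩
  · intro p hpδ
    by_cases hp0 : p = 0
    · subst hp0
      rw [norm_zero]
      simpa using abs_nonneg (Del u v w 0 (mMin w))
    · have hq := hquad p hp0 hpδ
      have hDel := hkey p
      have hnn : 0 ≤ u p - u 0 := by linarith [h2.u_min p]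
      have hm2 : min (c₀/2) ε * ‖p‖ ^ 2 ≤ (c₀/2) * ‖p‖ ^ 2 :=
        mul_le_mul_of_nonneg_right (min_le_left _ _) (sq_nonneg _)
      have hle : min (c₀/2) ε * ‖p‖ ^ 2 ≤ Del u v w p (mMin w) := by linarith
      exact hle.trans (le_abs_self _)
  · intro p hpc hpδ
    have hpK : p ∈ K := ⟨fun i => Set.Ioc_subset_Icc_self (hpc i), hpδ⟩
    have hε' := hεK p hpK
    have hpne : p ≠ 0 := by
      intro h; rw [h] at hpδ; rw [norm_zero] at hpδ; linarith
    have hlam : Lam v w p (mMin w) < Lam v w 0 (mMin w) := h3.uniqueMax p hpc hpne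
    have hDel := hkey p
    have hle : min (c₀/2) ε ≤ Del u v w p (mMin w) := by
      have := min_le_right (c₀/2) ε
      linarith
    exact hle.trans (le_abs_self _)
end
end
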